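/- Let R be a principal ideal domain and Λ a free R-module of rank 2m equipped with a non-degenerate alternating bilinear form with values in R. Then Λ admits a para-symplectic basis, i.e. a basis e_1,…,e_m,f_1,…,f_m with ⟨e_i,e_j⟩ = ⟨f_i,f_j⟩ = 0 and ⟨e_i,f_j⟩ = d_i δ_{ij} for some nonzero d_i ∈ R, which can moreover be ordered so that d_i divides d_{i+1} for all i < m. -/

import Mathlib

open Submodule

/-- Auxiliary decomposition: every `z` splits as an element of `W` plus a combination of `e,f`. -/
theorem my_decomp {R : Type*} [CommRing R] [IsDomain R]
    {Λ : Type*} [AddCommGroup Λ] [Module R Λ]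
    (B : LinearMap.BilinForm R Λ)
    (e f : Λ)
    (halt : ∀ x, B x x = 0)
    (hskew : ∀ x y, B x y = - B y x)
    (h1 : ∀ z, B e f ∣ B e z) (h2 : ∀ z, B e f ∣ B f z)
    (W : Submodule R Λ) (hW : ∀ z, z ∈ W ↔ B e z = 0 ∧ B f z = 0)
    (z : Λ) :
    ∃ (a b : R) (u : Λ), u ∈ W ∧ z = u + a • f + b • e := by
  obtain ⟨az, haz⟩ := h1 z
  obtain ⟨bz, hbz⟩ := h2 z
  refine ⟨az, -bz, z - az • f + bz • e, ?_, by rw [neg_smul]; abel⟩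
  rw [hW]
  constructor
  · simp only [map_add, map_sub, map_smul, smul_eq_mul, halt e, haz]
    ring
  · simp only [map_add, map_sub, map_smul, smul_eq_mul, halt f, hbz, hskew f e]
    ring

/-- Auxiliary: given a "para-hyperbolic pair" `e, f` whose value divides everything in the
first rows, together with a basis of the orthogonal complement `W`, we get a basis of `Λ`. -/
theorem my_combine {R : Type*} [CommRing R] [IsDomain R]
    {Λ : Type*} [AddCommGroup Λ] [Module R Λ]
    (B : LinearMap.BilinForm R Λ)
    (e f : Λ) (hd : B e f ≠ 0)
    (halt : ∀ x, B x x = 0)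
    (hskew : ∀ x y, B x y = - B y x)
    (h1 : ∀ z, B e f ∣ B e z) (h2 : ∀ z, B e f ∣ B f z)
    (W : Submodule R Λ) (hW : ∀ z, z ∈ W ↔ B e z = 0 ∧ B f z = 0)
    {ι : Type*} (c : Module.Basis ι R W) :
    ∃ b : Module.Basis (Fin 2 ⊕ ι) R Λ,
      ∀ i, b i = Sum.elim ![e, f] (fun j => (c j : Λ)) i := by
  -- the span of the coercion of `c` is `W`
  have hspanc : Submodule.span R (Set.range fun j => (c j : Λ)) = W := by
    have hrg : (Set.range fun j => (c j : Λ)) = W.subtype '' Set.range c := by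
      rw [← Set.range_comp]; rfl
    rw [hrg, Submodule.span_image, c.span_eq, Submodule.map_subtype_top]
  have hrange2 : Set.range ![e, f] = {e, f} := by
    simp only [Matrix.range_cons, Matrix.range_empty, Set.union_empty, Set.union_singleton]
    exact Set.pair_comm f e
  -- linear independence of the pair
  have hli2 : LinearIndependent R ![e, f] := by
    rw [LinearIndependent.pair_iff]
    intro s t hst
    have he' : B e (s • e + t • f) = 0 := by rw [hst]; simp
    have hf' : B f (s • e + t • f) = 0 := by rw [hst]; simp
    simp only [map_add, map_smul, smul_eq_mul, halt e, halt f, mul_zero, zero_add, add_zero,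
      hskew f e] at he' hf'
    constructor
    · rcases mul_eq_zero.mp hf' with h | h
      · exact h
      · exact absurd (neg_eq_zero.mp h) hd
    · exact (mul_eq_zero.mp he').resolve_right hd
  -- linear independence of the coerced basis of W
  have hliW : LinearIndependent R fun j => (c j : Λ) :=
    c.linearIndependent.map' W.subtype W.ker_subtype
  -- disjointness
  have hdisj : Disjoint (Submodule.span R (Set.range ![e, f]))
      (Submodule.span R (Set.range fun j => (c j : Λ))) := by
    rw [hspanc, hrange2, Submodule.disjoint_def]
    intro x hx hxW
    obtain ⟨s, t, hst⟩ := Submodule.mem_span_pair.mp hx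
    obtain ⟨hxe, hxf⟩ := (hW x).mp hxW
    rw [← hst] at hxe hxf
    simp only [map_add, map_smul, smul_eq_mul, halt e, halt f, mul_zero, zero_add, add_zero,
      hskew f e] at hxe hxf
    have hs : s = 0 := by
      rcases mul_eq_zero.mp hxf with h | h
      · exact h
      · exact absurd (neg_eq_zero.mp h) hd
    have ht : t = 0 := (mul_eq_zero.mp hxe).resolve_right hd
    rw [← hst, hs, ht, zero_smul, zero_smul, add_zero]
  have hli : LinearIndependent R (Sum.elim ![e, f] fun j => (c j : Λ)) :=
    hli2.sum_type hliW hdisj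
  -- spanning
  have hsp : ⊤ ≤ Submodule.span R (Set.range (Sum.elim ![e, f] fun j => (c j : Λ))) := by
    intro z _
    rw [Set.Sum.elim_range, Submodule.span_union]
    obtain ⟨a, b, u, huW, hz⟩ := my_decomp B e f halt hskew h1 h2 W hW z
    rw [hz]
    have he_mem : e ∈ Submodule.span R (Set.range ![e, f]) := by
      rw [hrange2]; exact subset_span (by simp)
    have hf_mem : f ∈ Submodule.span R (Set.range ![e, f]) := by
      rw [hrange2]; exact subset_span (by simp)
    have hu_mem : u ∈ Submodule.span R (Set.range fun j => (c j : Λ)) := by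
      rw [hspanc]; exact huW
    exact add_mem (add_mem (Submodule.mem_sup_right hu_mem)
      (Submodule.mem_sup_left (smul_mem _ _ hf_mem)))
      (Submodule.mem_sup_left (smul_mem _ _ he_mem))
  exact ⟨Module.Basis.mk hli hsp, fun i => Module.Basis.mk_apply hli hsp i⟩

theorem my_aux {R : Type*} [CommRing R] [IsDomain R] [IsPrincipalIdealRing R] :
    ∀ (m : ℕ) (Λ : Type u_5) [AddCommGroup Λ] [Module R Λ] [Module.Free R Λ] [Module.Finite R Λ]
      (B : LinearMap.BilinForm R Λ),
      (∀ x, B x x = 0) → (∀ x, (∀ y, B x y = 0) → x = 0) →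
      Module.finrank R Λ = 2 * m →
      ∃ (b : Module.Basis (Fin m ⊕ Fin m) R Λ) (d : Fin m → R),
        (∀ i, d i ≠ 0) ∧
        (∀ i j, B (b (Sum.inl i)) (b (Sum.inl j)) = 0) ∧
        (∀ i j, B (b (Sum.inr i)) (b (Sum.inr j)) = 0) ∧
        (∀ i j, B (b (Sum.inl i)) (b (Sum.inr j)) = if i = j then d i else 0) ∧
        (∀ i j : Fin m, i ≤ j → d i ∣ d j) := by
  intro m
  induction m with
  | zero =>
    intro Λ _ _ _ _ B halt hnd hrank
    have b0 : Module.Basis (Fin 0) R Λ :=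
      (Module.finBasis R Λ).reindex (finCongr (by simpa using hrank))
    haveI : Subsingleton Λ := b0.repr.toEquiv.subsingleton
    exact ⟨Module.Basis.empty Λ, Fin.elim0, fun i => i.elim0, fun i => i.elim0, fun i => i.elim0,
      fun i => i.elim0, fun i => i.elim0⟩
  | succ n ih =>
    intro Λ _ _ _ _ B halt hnd hrank
    have hskew : ∀ x y : Λ, B x y = - B y x := by
      intro x y
      have h := halt (x + y)
      simp only [map_add, LinearMap.add_apply, halt x, halt y, add_zero, zero_add] at h
      exact eq_neg_of_add_eq_zero_left (by linear_combination h)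
    -- there is a nonzero value
    have hex : ∃ x y : Λ, B x y ≠ 0 := by
      by_contra h
      push_neg at h
      haveI : Subsingleton Λ := ⟨fun a b => by rw [hnd a (h a), hnd b (h b)]⟩
      have h0 : Module.finrank R Λ = 0 := Module.finrank_zero_of_subsingleton
      omega
    -- maximal ideal among values
    set S : Set (Submodule R R) :=
      {I | ∃ x y : Λ, B x y ≠ 0 ∧ I = Ideal.span {B x y}} with hS
    have hSne : S.Nonempty := by
      obtain ⟨x, y, hxy⟩ := hex
      exact ⟨Ideal.span {B x y}, x, y, hxy, rfl⟩
    obtain ⟨I, ⟨e, f, hd0, hI⟩, hImax⟩ :=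
      (set_has_maximal_iff_noetherian.mpr inferInstance) S hSne
    -- key divisibility lemma
    have key : ∀ c : R, (∀ α β : R, ∃ x y : Λ, B x y = α * B e f + β * c) → B e f ∣ c := by
      intro c hc
      obtain ⟨g, hg⟩ := (IsPrincipalIdealRing.principal (Ideal.span ({B e f, c} : Set R))).principal
      have hg' : Ideal.span ({B e f, c} : Set R) = Ideal.span ({g} : Set R) := hg
      have hdg : g ∣ B e f := by
        rw [← Ideal.mem_span_singleton (α := R), ← hg']
        exact Ideal.subset_span (by simp)
      have hcg : g ∣ c := by
        rw [← Ideal.mem_span_singleton (α := R), ← hg']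
        exact Ideal.subset_span (by simp)
      have hgmem : g ∈ Ideal.span ({B e f, c} : Set R) := by
        rw [hg']; exact Ideal.subset_span (by simp)
      obtain ⟨α, β, hαβ⟩ := Ideal.mem_span_pair.mp hgmem
      obtain ⟨x, y, hxy⟩ := hc α β
      have hgval : B x y = g := by rw [hxy, hαβ]
      have hgne : g ≠ 0 := by
        rintro rfl
        exact hd0 (zero_dvd_iff.mp hdg)
      have hmem : Ideal.span ({g} : Set R) ∈ S := ⟨x, y, by rw [hgval]; exact hgne, by rw [hgval]⟩
      have hle : I ≤ Ideal.span ({g} : Set R) := by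
        rw [hI, Ideal.span_singleton_le_span_singleton]
        exact hdg
      have heq : I = Ideal.span ({g} : Set R) := by
        by_contra hne
        exact hImax _ hmem (lt_of_le_of_ne hle hne)
      have : B e f ∣ g := by
        rw [← Ideal.span_singleton_le_span_singleton, ← hI, heq]
      exact dvd_trans this hcg
    have h1 : ∀ z, B e f ∣ B e z := by
      intro z
      refine key _ (fun α β => ⟨e, α • f + β • z, ?_⟩)
      simp only [map_add, map_smul, smul_eq_mul]
    have h2 : ∀ z, B e f ∣ B f z := by
      intro z
      refine key _ (fun α β => ⟨f, (-α) • e + β • z, ?_⟩)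
      simp only [map_add, map_smul, smul_eq_mul, hskew f e]
      ring
    -- the orthogonal complement
    set W : Submodule R Λ := LinearMap.ker ((B e).prod (B f)) with hWdef
    have hW : ∀ z : Λ, z ∈ W ↔ B e z = 0 ∧ B f z = 0 := by
      intro z
      simp [hWdef, LinearMap.mem_ker, LinearMap.prod_apply, Prod.mk_eq_zero]
    -- full divisibility
    have h4 : ∀ z w : Λ, B e f ∣ B z w := by
      have h3 : ∀ u v : Λ, u ∈ W → v ∈ W → B e f ∣ B u v := by
        intro u v hu hv
        obtain ⟨hue, huf⟩ := (hW u).mp hu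
        obtain ⟨hve, hvf⟩ := (hW v).mp hv
        refine key _ (fun α β => ⟨α • e + β • u, f + v, ?_⟩)
        simp only [map_add, map_smul, LinearMap.add_apply, LinearMap.smul_apply, smul_eq_mul,
          hve, hskew u f, huf]
        ring
      intro z w
      obtain ⟨az, bz, u, huW, hzu⟩ := my_decomp B e f halt hskew h1 h2 W hW z
      obtain ⟨aw, bw, v, hvW, hwv⟩ := my_decomp B e f halt hskew h1 h2 W hW w
      obtain ⟨hue, huf⟩ := (hW u).mp huW
      obtain ⟨hve, hvf⟩ := (hW v).mp hvW
      have hzw : B z w = B u v + (az * bw) * (B f e) + (bz * aw) * (B e f) := by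
        rw [hzu, hwv]
        simp only [map_add, map_smul, LinearMap.add_apply, LinearMap.smul_apply, smul_eq_mul,
          halt e, halt f, hve, hvf, hskew u f, hskew u e, hue, huf]
        ring
      rw [hzw, hskew f e]
      refine dvd_add (dvd_add (h3 u v huW hvW) ?_) (dvd_mul_left _ _)
      exact Dvd.dvd.mul_left (dvd_neg.mpr dvd_rfl) _
    -- basis of W and its rank
    obtain ⟨k, cW⟩ := W.basisOfPid (Module.finBasis R Λ)
    haveI : Module.Free R W := Module.Free.of_basis cW
    haveI : Module.Finite R W := Module.Finite.of_basis cW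
    obtain ⟨bΛ0, hbΛ0⟩ := my_combine B e f hd0 halt hskew h1 h2 W hW cW
    have hcard : Module.finrank R Λ = 2 + k := by
      rw [Module.finrank_eq_card_basis bΛ0]
      simp
    have hrkW : Module.finrank R W = 2 * n := by
      rw [Module.finrank_eq_card_basis cW]
      simp only [Fintype.card_fin]
      omega
    -- restricted form
    set B' : LinearMap.BilinForm R W := B.compl₁₂ W.subtype W.subtype with hB'def
    have hB'apply : ∀ u v : W, B' u v = B (u : Λ) (v : Λ) := fun u v => rfl
    have halt' : ∀ u : W, B' u u = 0 := fun u => halt (u : Λ)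
    have hnd' : ∀ u : W, (∀ v : W, B' u v = 0) → u = 0 := by
      intro u hu
      have hcoe : (u : Λ) = 0 := by
        refine hnd _ (fun z => ?_)
        obtain ⟨az, bz, w, hwW, hzw⟩ := my_decomp B e f halt hskew h1 h2 W hW z
        obtain ⟨hue, huf⟩ := (hW u).mp u.2
        rw [hzw]
        simp only [map_add, map_smul, smul_eq_mul, hskew (u : Λ) f, hskew (u : Λ) e, hue, huf,
          hu ⟨w, hwW⟩]
        have := hu ⟨w, hwW⟩
        rw [hB'apply] at this
        simp [this]
      exact Subtype.ext hcoe
    obtain ⟨bW, dW, hdW0, hWee, hWff, hWef, hWchain⟩ := ih W B' halt' hnd' hrkW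
    simp only [hB'apply] at hWee hWff hWef
    -- final basis of Λ
    obtain ⟨b2, hb2⟩ := my_combine B e f hd0 halt hskew h1 h2 W hW bW
    let E : (Fin 2 ⊕ (Fin n ⊕ Fin n)) ≃ (Fin (n + 1) ⊕ Fin (n + 1)) :=
      { toFun := Sum.elim (fun i => if i = 0 then Sum.inl 0 else Sum.inr 0)
          (Sum.elim (fun j => Sum.inl j.succ) (fun j => Sum.inr j.succ))
        invFun := Sum.elim (fun i => Fin.cases (Sum.inl 0) (fun j => Sum.inr (Sum.inl j)) i)
          (fun i => Fin.cases (Sum.inl 1) (fun j => Sum.inr (Sum.inr j)) i)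
        left_inv := by
          rintro (i | (j | j))
          · fin_cases i <;> simp
          · simp
          · simp
        right_inv := by
          rintro (i | i) <;> induction i using Fin.cases <;>
            simp [Fin.succ_ne_zero] }
    have hmemW : ∀ s : Fin n ⊕ Fin n, B e (bW s : Λ) = 0 ∧ B f (bW s : Λ) = 0 :=
      fun s => (hW _).mp (bW s).2
    have hbinl0 : b2.reindex E (Sum.inl 0) = e := by
      rw [Module.Basis.reindex_apply]
      simp [E, hb2]
    have hbinr0 : b2.reindex E (Sum.inr 0) = f := by
      rw [Module.Basis.reindex_apply]
      simp [E, hb2]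
    have hbinls : ∀ j : Fin n, b2.reindex E (Sum.inl j.succ) = (bW (Sum.inl j) : Λ) := by
      intro j
      rw [Module.Basis.reindex_apply]
      simp [E, hb2]
    have hbinrs : ∀ j : Fin n, b2.reindex E (Sum.inr j.succ) = (bW (Sum.inr j) : Λ) := by
      intro j
      rw [Module.Basis.reindex_apply]
      simp [E, hb2]
    refine ⟨b2.reindex E, Fin.cases (B e f) dW, ?_, ?_, ?_, ?_, ?_⟩
    · intro i
      induction i using Fin.cases with
      | zero => simpa using hd0
      | succ j => simpa using hdW0 j
    · intro i j
      induction i using Fin.cases with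
      | zero =>
        induction j using Fin.cases with
        | zero => rw [hbinl0]; exact halt e
        | succ j => rw [hbinl0, hbinls]; exact (hmemW _).1
      | succ i =>
        induction j using Fin.cases with
        | zero => rw [hbinl0, hbinls, hskew]; simp [(hmemW _).1]
        | succ j => rw [hbinls, hbinls]; exact hWee i j
    · intro i j
      induction i using Fin.cases with
      | zero =>
        induction j using Fin.cases with
        | zero => rw [hbinr0]; exact halt f
        | succ j => rw [hbinr0, hbinrs]; exact (hmemW _).2
      | succ i =>
        induction j using Fin.cases with
        | zero => rw [hbinr0, hbinrs, hskew]; simp [(hmemW _).2]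
        | succ j => rw [hbinrs, hbinrs]; exact hWff i j
    · intro i j
      induction i using Fin.cases with
      | zero =>
        induction j using Fin.cases with
        | zero => rw [hbinl0, hbinr0]; simp
        | succ j =>
          rw [hbinl0, hbinrs, if_neg (Ne.symm (Fin.succ_ne_zero j))]
          exact (hmemW _).1
      | succ i =>
        induction j using Fin.cases with
        | zero =>
          rw [hbinls, hbinr0, if_neg (Fin.succ_ne_zero i), hskew]
          simp [(hmemW _).2]
        | succ j =>
          rw [hbinls, hbinrs, hWef i j]
          by_cases h : i = j <;> simp [h, Fin.succ_inj]
    · intro i j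
      induction i using Fin.cases with
      | zero =>
        induction j using Fin.cases with
        | zero => intro _; exact dvd_rfl
        | succ l =>
          intro _
          have h := hWef l l
          rw [if_pos rfl] at h
          simp only [Fin.cases_zero, Fin.cases_succ]
          rw [← h]
          exact h4 _ _
      | succ i =>
        induction j using Fin.cases with
        | zero =>
          intro hij
          exact absurd (Fin.le_zero_iff'.mp hij) (Fin.succ_ne_zero i)
        | succ l =>
          intro hij
          simp only [Fin.cases_succ]
          exact hWchain i l (by rwa [Fin.succ_le_succ_iff] at hij)

/-- Every free module of rank `2m` over a PID with a non-degenerate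
alternating bilinear form admits an ordered para-symplectic basis. -/
theorem stmt_0 (R : Type*) [CommRing R] [IsDomain R] [IsPrincipalIdealRing R]
    (Λ : Type*) [AddCommGroup Λ] [Module R Λ] [Module.Free R Λ] [Module.Finite R Λ]
    (m : ℕ) (hrank : Module.finrank R Λ = 2 * m)
    (B : LinearMap.BilinForm R Λ)
    (halt : ∀ x, B x x = 0)
    (hnd : ∀ x, (∀ y, B x y = 0) → x = 0) :
    ∃ (b : Module.Basis (Fin m ⊕ Fin m) R Λ) (d : Fin m → R),
      (∀ i, d i ≠ 0) ∧
      (∀ i j, B (b (Sum.inl i)) (b (Sum.inl j)) = 0) ∧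
      (∀ i j, B (b (Sum.inr i)) (b (Sum.inr j)) = 0) ∧
      (∀ i j, B (b (Sum.inl i)) (b (Sum.inr j)) = if i = j then d i else 0) ∧
      (∀ i j : Fin m, i ≤ j → d i ∣ d j) := by
  exact my_aux m Λ B halt hnd hrank
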